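/- Let 0 → M' → M → M'' → 0 be an exact sequence of finitely generated free ℤ-modules, where M sits as a lattice in a real inner product space M_ℝ, M'_ℝ carries the subspace inner product and M''_ℝ the quotient inner product. Then χ(M) - χ(M') - χ(M'') = log V(rank M) - log V(rank M') - log V(rank M''), where V(r) is the volume of the unit ball in ℝ^r. -/

import Mathlib

open MeasureTheory Module

/-- The volume of the unit ball in the Euclidean space `ℝ^r`. -/
noncomputable def unitBallVol (r : ℕ) : ℝ :=
  (volume (Metric.ball (0 : EuclideanSpace ℝ (Fin r)) 1)).toReal

theorem ball_vol_eq (E : Type*) [NormedAddCommGroup E] [InnerProductSpace ℝ E]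
    [FiniteDimensional ℝ E] [MeasurableSpace E] [BorelSpace E] :
    (volume (Metric.ball (0 : E) 1)).toReal = unitBallVol (finrank ℝ E) := by
  unfold unitBallVol
  congr 1
  rw [← ((stdOrthonormalBasis ℝ E).measurePreserving_repr_symm).measure_preimage
      measurableSet_ball.nullMeasurableSet, LinearIsometryEquiv.preimage_ball,
    LinearIsometryEquiv.symm_symm, map_zero]

theorem ball_vol_ne_zero (E : Type*) [NormedAddCommGroup E] [InnerProductSpace ℝ E]
    [FiniteDimensional ℝ E] [MeasurableSpace E] [BorelSpace E] :
    (volume (Metric.ball (0 : E) 1)).toReal ≠ 0 := by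
  rw [ENNReal.toReal_ne_zero]
  exact ⟨(Metric.measure_ball_pos volume 0 one_pos).ne', measure_ball_lt_top.ne⟩

open MeasureTheory Module Submodule RealInnerProductSpace


theorem covolume_eq_det_onb {E : Type*} [NormedAddCommGroup E] [InnerProductSpace ℝ E]
    [FiniteDimensional ℝ E] [MeasurableSpace E] [BorelSpace E]
    {ι : Type*} [Fintype ι] [DecidableEq ι]
    (L : Submodule ℤ E) [DiscreteTopology L] [IsZLattice ℝ L]
    (b : Basis ι ℤ L) (b₀ : OrthonormalBasis ι ℝ E) :
    ZLattice.covolume L volume = |b₀.toBasis.det ((↑) ∘ b)| := by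
  rw [ZLattice.covolume_eq_det_mul_measureReal L volume b b₀.toBasis,
    measureReal_congr (ZSpan.fundamentalDomain_ae_parallelepiped b₀.toBasis volume)]
  rw [OrthonormalBasis.coe_toBasis, Measure.real, b₀.volume_parallelepiped]
  simp

theorem covolume_mul
    {E' E E'' : Type*}
    [NormedAddCommGroup E'] [InnerProductSpace ℝ E'] [FiniteDimensional ℝ E']
    [MeasurableSpace E'] [BorelSpace E']
    [NormedAddCommGroup E] [InnerProductSpace ℝ E] [FiniteDimensional ℝ E]
    [MeasurableSpace E] [BorelSpace E]
    [NormedAddCommGroup E''] [InnerProductSpace ℝ E''] [FiniteDimensional ℝ E'']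
    [MeasurableSpace E''] [BorelSpace E'']
    (f : E' →ₗᵢ[ℝ] E) (g : E →ₗ[ℝ] E'')
    (hsurj : Function.Surjective g)
    (hexact : LinearMap.ker g = LinearMap.range f.toLinearMap)
    (hquot : ∀ x ∈ (LinearMap.ker g)ᗮ, ‖g x‖ = ‖x‖)
    (M' : Submodule ℤ E') [DiscreteTopology M'] [IsZLattice ℝ M']
    (M : Submodule ℤ E) [DiscreteTopology M] [IsZLattice ℝ M]
    (M'' : Submodule ℤ E'') [DiscreteTopology M''] [IsZLattice ℝ M'']
    (hM' : M'.map (f.toLinearMap.restrictScalars ℤ) =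
      M ⊓ (LinearMap.ker g).restrictScalars ℤ)
    (hM'' : M.map (g.restrictScalars ℤ) = M'') :
    ZLattice.covolume M volume
      = ZLattice.covolume M' volume * ZLattice.covolume M'' volume := by
  classical
  set K : Submodule ℝ E := LinearMap.ker g with hK
  -- the isometric section σ of g, with values in Kᗮ
  set G : Kᗮ →ₗᵢ[ℝ] E'' :=
    ⟨g.comp (Kᗮ).subtype, fun x => hquot x x.2⟩ with hG
  have hGsurj : Function.Surjective G := by
    intro y
    obtain ⟨x, hx⟩ := hsurj y
    refine ⟨⟨x - (orthogonalProjection K x : E), K.sub_starProjection_mem_orthogonal x⟩, ?_⟩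
    have : g ((orthogonalProjection K x : E)) = 0 := (orthogonalProjection K x).2
    simp only [hG, LinearIsometry.coe_mk, LinearMap.comp_apply, Submodule.coe_subtype,
      map_sub, this, sub_zero, hx]
    change g (x - (orthogonalProjection K x : E)) = y
    rw [map_sub, this, sub_zero, hx]
  set Φ : Kᗮ ≃ₗᵢ[ℝ] E'' := LinearIsometryEquiv.ofSurjective G hGsurj with hΦ
  set σ : E'' →ₗᵢ[ℝ] E := (Kᗮ).subtypeₗᵢ.comp Φ.symm.toLinearIsometry with hσ
  have hσmem : ∀ y, σ y ∈ Kᗮ := fun y => (Φ.symm y).2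
  have hgσ : ∀ y, g (σ y) = y := by
    intro y
    calc g (σ y) = Φ (Φ.symm y) :=
          (congrFun (LinearIsometryEquiv.coe_ofSurjective G hGsurj) (Φ.symm y)).symm
      _ = y := Φ.apply_symm_apply y
  -- ℤ-linear data: π : M → M'', section s, inclusion j : M' → M
  have hmemM'' : ∀ x : M, g x ∈ M'' := fun x => hM'' ▸ Submodule.mem_map_of_mem x.2
  set π : M →ₗ[ℤ] M'' :=
    LinearMap.codRestrict M'' ((g.restrictScalars ℤ).comp M.subtype) hmemM'' with hπ
  have hπsurj : Function.Surjective π := by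
    intro y
    have : (y : E'') ∈ M.map (g.restrictScalars ℤ) := hM'' ▸ y.2
    obtain ⟨x, hx, hgx⟩ := this
    exact ⟨⟨x, hx⟩, Subtype.ext hgx⟩
  obtain ⟨s, hs⟩ := Module.projective_lifting_property π (LinearMap.id) hπsurj
  have hπs' : ∀ y : M'', π (s y) = y := fun y => LinearMap.congr_fun hs y
  have hπs : ∀ y : M'', g ((s y : M) : E) = (y : E'') := by
    intro y
    have h := LinearMap.congr_fun hs y
    exact congrArg Subtype.val h
  have hmemM : ∀ x : M', f x ∈ M := by
    intro x
    have h : f x ∈ M'.map (f.toLinearMap.restrictScalars ℤ) := Submodule.mem_map_of_mem x.2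
    rw [hM'] at h
    exact h.1
  set j : M' →ₗ[ℤ] M :=
    LinearMap.codRestrict M ((f.toLinearMap.restrictScalars ℤ).comp M'.subtype) hmemM with hj
  have hgf : ∀ x : E', g (f x) = 0 := by
    intro x
    have h : f x ∈ LinearMap.range f.toLinearMap := LinearMap.mem_range_self _ x
    rw [← hexact] at h
    exact h
  have hπj : ∀ x : M', π (j x) = 0 := fun x => Subtype.ext (hgf x)
  set T : M' × M'' →ₗ[ℤ] M := j.coprod s with hT
  have hTbij : Function.Bijective T := by
    constructor
    · intro a b hab
      have h1 : π (T a) = π (T b) := congrArg π hab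
      simp only [hT, LinearMap.coprod_apply, map_add, hπj, zero_add, hπs'] at h1
      have h2 : a.2 = b.2 := h1
      have h3 : j a.1 = j b.1 := by
        have := hab
        simp only [hT, LinearMap.coprod_apply, h2] at this
        exact add_right_cancel this
      have h4 : a.1 = b.1 := by
        have := congrArg Subtype.val h3
        exact Subtype.ext (f.injective (by exact this))
      exact Prod.ext h4 h2
    · intro m
      set y := π m with hy
      have hker : ((m - s y : M) : E) ∈ K := by
        have : g ((m : E)) = (y : E'') := rfl
        simp only [hK, LinearMap.mem_ker, AddSubgroupClass.coe_sub, map_sub, this, hπs, sub_self]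
      have hmem2 : ((m - s y : M) : E) ∈ M ⊓ K.restrictScalars ℤ := ⟨(m - s y).2, hker⟩
      rw [← hM'] at hmem2
      obtain ⟨x, hx, hfx⟩ := hmem2
      refine ⟨(⟨x, hx⟩, y), ?_⟩
      have : j ⟨x, hx⟩ = m - s y := Subtype.ext hfx
      simp only [hT, LinearMap.coprod_apply, this, sub_add_cancel]
  set Θ : (M' × M'') ≃ₗ[ℤ] M := LinearEquiv.ofBijective T hTbij with hΘ
  -- lattice bases
  set b' := Module.Free.chooseBasis ℤ ↥M' with hb'
  set b'' := Module.Free.chooseBasis ℤ ↥M'' with hb''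
  set c : Basis (Module.Free.ChooseBasisIndex ℤ ↥M' ⊕ Module.Free.ChooseBasisIndex ℤ ↥M'') ℤ ↥M := (b'.prod b'').map Θ with hc
  have hcl : ∀ i, ((c (Sum.inl i) : ↥M) : E) = f ((b' i : ↥M') : E') := by
    intro i
    simp only [hc, Basis.map_apply, Basis.prod_apply, Sum.elim_inl, Function.comp_apply,
      LinearMap.coe_inl, hΘ, LinearEquiv.ofBijective_apply, hT, LinearMap.coprod_apply,
      map_zero, add_zero]
    rfl
  have hcr : ∀ i, ((c (Sum.inr i) : ↥M) : E) = ((s (b'' i) : ↥M) : E) := by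
    intro i
    simp only [hc, Basis.map_apply, Basis.prod_apply, Sum.elim_inr, Function.comp_apply,
      LinearMap.coe_inr, hΘ, LinearEquiv.ofBijective_apply, hT, LinearMap.coprod_apply,
      map_zero, zero_add]
  -- orthonormal bases
  have card' : Fintype.card (Module.Free.ChooseBasisIndex ℤ ↥M') = finrank ℝ E' :=
    (Module.finrank_eq_card_chooseBasisIndex ℤ ↥M').symm.trans (ZLattice.rank ℝ M')
  have card'' : Fintype.card (Module.Free.ChooseBasisIndex ℤ ↥M'') = finrank ℝ E'' :=
    (Module.finrank_eq_card_chooseBasisIndex ℤ ↥M'').symm.trans (ZLattice.rank ℝ M'')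
  set e' : OrthonormalBasis (Module.Free.ChooseBasisIndex ℤ ↥M') ℝ E' :=
    (stdOrthonormalBasis ℝ E').reindex (Fintype.equivFinOfCardEq card').symm with he'
  set e'' : OrthonormalBasis (Module.Free.ChooseBasisIndex ℤ ↥M'') ℝ E'' :=
    (stdOrthonormalBasis ℝ E'').reindex (Fintype.equivFinOfCardEq card'').symm with he''
  set v : Module.Free.ChooseBasisIndex ℤ ↥M' ⊕ Module.Free.ChooseBasisIndex ℤ ↥M'' → E := Sum.elim (⇑f ∘ ⇑e') (⇑σ ∘ ⇑e'') with hv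
  have horth : ∀ (a : E') (y : E''), ⟪f a, σ y⟫ = 0 := by
    intro a y
    have hfa : f a ∈ K := by
      have h : f a ∈ LinearMap.range f.toLinearMap := LinearMap.mem_range_self _ a
      rw [← hexact] at h; exact h
    exact (Submodule.mem_orthogonal _ _).mp (hσmem y) _ hfa
  have hon : Orthonormal ℝ v := by
    rw [orthonormal_iff_ite]
    rintro (i | i) (j | j)
    · simp only [hv, Sum.elim_inl, Function.comp_apply, LinearIsometry.inner_map_map]
      simpa using orthonormal_iff_ite.mp e'.orthonormal i j
    · simpa only [hv, Sum.elim_inl, Sum.elim_inr, Function.comp_apply] using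
        (horth (e' i) (e'' j)).trans (by simp)
    · simp only [hv, Sum.elim_inl, Sum.elim_inr, Function.comp_apply]
      rw [real_inner_comm, horth (e' j) (e'' i)]
      simp
    · simp only [hv, Sum.elim_inr, Function.comp_apply, LinearIsometry.inner_map_map]
      simpa using orthonormal_iff_ite.mp e''.orthonormal i j
  have hsub' : ∀ a : E', f a ∈ Submodule.span ℝ (Set.range v) := by
    intro a
    have ha : a ∈ Submodule.span ℝ (Set.range ⇑e'.toBasis) := by rw [Basis.span_eq]; trivial
    rw [OrthonormalBasis.coe_toBasis] at ha
    have h2 := Submodule.apply_mem_span_image_of_mem_span (f : E' →ₗ[ℝ] E) ha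
    refine Submodule.span_mono ?_ h2
    rintro _ ⟨u, ⟨i, rfl⟩, rfl⟩
    exact ⟨Sum.inl i, rfl⟩
  have hsub'' : ∀ y : E'', σ y ∈ Submodule.span ℝ (Set.range v) := by
    intro y
    have ha : y ∈ Submodule.span ℝ (Set.range ⇑e''.toBasis) := by rw [Basis.span_eq]; trivial
    rw [OrthonormalBasis.coe_toBasis] at ha
    have h2 := Submodule.apply_mem_span_image_of_mem_span (σ : E'' →ₗ[ℝ] E) ha
    refine Submodule.span_mono ?_ h2
    rintro _ ⟨u, ⟨i, rfl⟩, rfl⟩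
    exact ⟨Sum.inr i, rfl⟩
  have hsp : ⊤ ≤ Submodule.span ℝ (Set.range v) := by
    intro x _
    have hx : x ∈ K ⊔ Kᗮ := by rw [Submodule.sup_orthogonal_of_hasOrthogonalProjection]; trivial
    obtain ⟨u, hu, w, hw, rfl⟩ := Submodule.mem_sup.mp hx
    rw [hexact] at hu
    obtain ⟨a, rfl⟩ := hu
    obtain ⟨y, rfl⟩ : ∃ y, σ y = w := ⟨Φ ⟨w, hw⟩, by simp [hσ]⟩
    exact Submodule.add_mem _ (hsub' a) (hsub'' y)
  set b₀ : OrthonormalBasis (Module.Free.ChooseBasisIndex ℤ ↥M' ⊕ Module.Free.ChooseBasisIndex ℤ ↥M'') ℝ E := OrthonormalBasis.mk hon hsp with hb₀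
  have hb₀coe : ⇑b₀ = v := OrthonormalBasis.coe_mk hon hsp
  set A := e'.toBasis.toMatrix ((↑) ∘ ⇑b') with hA
  set D := e''.toBasis.toMatrix ((↑) ∘ ⇑b'') with hD
  set Bm : Matrix (Module.Free.ChooseBasisIndex ℤ ↥M') (Module.Free.ChooseBasisIndex ℤ ↥M'') ℝ :=
    fun k l => ⟪f (e' k), ((s (b'' l) : ↥M) : E)⟫ with hBm
  have hdec : ∀ (k) (x : E), ⟪σ (e'' k), x⟫ = ⟪e'' k, g x⟫ := by
    intro k x
    have hxk : x - σ (g x) ∈ K := by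
      have : g (x - σ (g x)) = 0 := by rw [map_sub, hgσ, sub_self]
      exact this
    have h0 : ⟪σ (e'' k), x - σ (g x)⟫ = 0 := by
      rw [real_inner_comm]
      exact (Submodule.mem_orthogonal _ _).mp (hσmem _) _ hxk
    calc ⟪σ (e'' k), x⟫ = ⟪σ (e'' k), (x - σ (g x)) + σ (g x)⟫ := by rw [sub_add_cancel]
      _ = ⟪σ (e'' k), x - σ (g x)⟫ + ⟪σ (e'' k), σ (g x)⟫ := inner_add_right _ _ _
      _ = ⟪e'' k, g x⟫ := by rw [h0, zero_add, LinearIsometry.inner_map_map]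
  have hmat : b₀.toBasis.toMatrix ((↑) ∘ ⇑c) = Matrix.fromBlocks A Bm 0 D := by
    ext k l
    rw [Basis.toMatrix_apply, OrthonormalBasis.coe_toBasis_repr_apply,
      OrthonormalBasis.repr_apply_apply, hb₀coe]
    cases k with
    | inl k =>
      cases l with
      | inl l =>
        simp only [Function.comp_apply, hcl, hv, Sum.elim_inl, Matrix.fromBlocks_apply₁₁,
          LinearIsometry.inner_map_map, hA, Basis.toMatrix_apply,
          OrthonormalBasis.coe_toBasis_repr_apply, OrthonormalBasis.repr_apply_apply]
      | inr l =>
        simp only [Function.comp_apply, hcr, hv, Sum.elim_inl, Matrix.fromBlocks_apply₁₂, hBm]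
        rfl
    | inr k =>
      cases l with
      | inl l =>
        simp only [Function.comp_apply, hcl, hv, Sum.elim_inr, Matrix.fromBlocks_apply₂₁,
          Matrix.zero_apply]
        rw [real_inner_comm]
        exact horth _ _
      | inr l =>
        simp only [Function.comp_apply, hcr, hv, Sum.elim_inr, Matrix.fromBlocks_apply₂₂,
          hD, Basis.toMatrix_apply, OrthonormalBasis.coe_toBasis_repr_apply,
          OrthonormalBasis.repr_apply_apply]
        rw [hdec, hπs]
  have hdet : b₀.toBasis.det ((↑) ∘ ⇑c)
      = e'.toBasis.det ((↑) ∘ ⇑b') * e''.toBasis.det ((↑) ∘ ⇑b'') := by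
    rw [Basis.det_apply, Basis.det_apply, Basis.det_apply, hmat,
      Matrix.det_fromBlocks_zero₂₁]
  rw [covolume_eq_det_onb M c b₀, covolume_eq_det_onb M' b' e', covolume_eq_det_onb M'' b'' e'',
    hdet, abs_mul]

/-- Exact additivity of the arithmetic volume `χ` in an exact sequence
`0 → M' → M → M'' → 0` of lattices, where `M'` carries the subspace inner product
(encoded by the isometric embedding `f`) and `M''` the quotient inner product (encoded by
the surjection `g` which is isometric on the orthogonal complement of its kernel):
`χ(M) - χ(M') - χ(M'') = log V(rank M) - log V(rank M') - log V(rank M'')`. -/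
theorem chi_sub_chi_sub_chi_eq
    {E' E E'' : Type*}
    [NormedAddCommGroup E'] [InnerProductSpace ℝ E'] [FiniteDimensional ℝ E']
    [MeasurableSpace E'] [BorelSpace E']
    [NormedAddCommGroup E] [InnerProductSpace ℝ E] [FiniteDimensional ℝ E]
    [MeasurableSpace E] [BorelSpace E]
    [NormedAddCommGroup E''] [InnerProductSpace ℝ E''] [FiniteDimensional ℝ E'']
    [MeasurableSpace E''] [BorelSpace E'']
    (f : E' →ₗᵢ[ℝ] E) (g : E →ₗ[ℝ] E'')
    (hsurj : Function.Surjective g)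
    (hexact : LinearMap.ker g = LinearMap.range f.toLinearMap)
    (hquot : ∀ x ∈ (LinearMap.ker g)ᗮ, ‖g x‖ = ‖x‖)
    (M' : Submodule ℤ E') [DiscreteTopology M'] [IsZLattice ℝ M']
    (M : Submodule ℤ E) [DiscreteTopology M] [IsZLattice ℝ M]
    (M'' : Submodule ℤ E'') [DiscreteTopology M''] [IsZLattice ℝ M'']
    (hM' : M'.map (f.toLinearMap.restrictScalars ℤ) =
      M ⊓ (LinearMap.ker g).restrictScalars ℤ)
    (hM'' : M.map (g.restrictScalars ℤ) = M'') :
    Real.log ((volume (Metric.ball (0 : E) 1)).toReal / ZLattice.covolume M)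
      - Real.log ((volume (Metric.ball (0 : E') 1)).toReal / ZLattice.covolume M')
      - Real.log ((volume (Metric.ball (0 : E'') 1)).toReal / ZLattice.covolume M'')
    = Real.log (unitBallVol (finrank ℤ M)) - Real.log (unitBallVol (finrank ℤ M'))
      - Real.log (unitBallVol (finrank ℤ M'')) := by

  have hu : unitBallVol (finrank ℤ M) = (volume (Metric.ball (0 : E) 1)).toReal := by
    rw [ZLattice.rank ℝ M, ball_vol_eq E]
  have hu' : unitBallVol (finrank ℤ M') = (volume (Metric.ball (0 : E') 1)).toReal := by
    rw [ZLattice.rank ℝ M', ball_vol_eq E']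
  have hu'' : unitBallVol (finrank ℤ M'') = (volume (Metric.ball (0 : E'') 1)).toReal := by
    rw [ZLattice.rank ℝ M'', ball_vol_eq E'']
  rw [hu, hu', hu'',
    Real.log_div (ball_vol_ne_zero E) (ZLattice.covolume_ne_zero M volume),
    Real.log_div (ball_vol_ne_zero E') (ZLattice.covolume_ne_zero M' volume),
    Real.log_div (ball_vol_ne_zero E'') (ZLattice.covolume_ne_zero M'' volume)]
  have hc : Real.log (ZLattice.covolume M volume)
      = Real.log (ZLattice.covolume M' volume) + Real.log (ZLattice.covolume M'' volume) := by
    rw [covolume_mul f g hsurj hexact hquot M' M M'' hM' hM'',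
      Real.log_mul (ZLattice.covolume_ne_zero M' volume) (ZLattice.covolume_ne_zero M'' volume)]
  linarith
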